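/- Let m > 0, ω ∈ ℝ, and for i = 0, 1, 2 let aᵢ = 2πi/3, and qᵢ(t) = (r cos(ωt + aᵢ), r sin(ωt + aᵢ), y, z) with r > 0. Then the total angular momentum component c_{wx}(t) = Σᵢ m (wᵢ ẋᵢ - ẇᵢ xᵢ) equals 3 m r² ω for all t, and the component c_{wy}(t) = Σᵢ m (wᵢ ẏᵢ - ẇᵢ yᵢ) equals 0 for all t. -/

import Mathlib

open Real

theorem stmt_10 (m ω r y z : ℝ) (hm : 0 < m) (hr : 0 < r)
    (a : Fin 3 → ℝ) (ha : ∀ i : Fin 3, a i = 2 * π * (i : ℕ) / 3)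
    (W X Y Z : Fin 3 → ℝ → ℝ)
    (hW : ∀ i t, W i t = r * Real.cos (ω * t + a i))
    (hX : ∀ i t, X i t = r * Real.sin (ω * t + a i))
    (hY : ∀ i t, Y i t = y) (hZ : ∀ i t, Z i t = z) :
    ∀ t : ℝ,
      (∑ i : Fin 3, m * (W i t * deriv (X i) t - deriv (W i) t * X i t))
        = 3 * m * r ^ 2 * ω ∧
      (∑ i : Fin 3, m * (W i t * deriv (Y i) t - deriv (W i) t * Y i t)) = 0 := by
  intro t
  have hlin : ∀ (i : Fin 3), HasDerivAt (fun t : ℝ => ω * t + a i) ω t := by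
    intro i
    simpa using ((hasDerivAt_id t).const_mul ω).add_const (a i)
  have hW' : ∀ i : Fin 3, deriv (W i) t = -(r * ω * Real.sin (ω * t + a i)) := by
    intro i
    have : HasDerivAt (W i) (-(r * ω * Real.sin (ω * t + a i))) t := by
      have h1 := ((hlin i).cos).const_mul r
      have h2 : W i = fun s : ℝ => r * Real.cos (ω * s + a i) := funext (hW i)
      rw [h2]
      exact h1.congr_deriv (by ring)
    exact this.deriv
  have hX' : ∀ i : Fin 3, deriv (X i) t = r * ω * Real.cos (ω * t + a i) := by
    intro i
    have : HasDerivAt (X i) (r * ω * Real.cos (ω * t + a i)) t := by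
      have h1 := ((hlin i).sin).const_mul r
      have h2 : X i = fun s : ℝ => r * Real.sin (ω * s + a i) := funext (hX i)
      rw [h2]
      exact h1.congr_deriv (by ring)
    exact this.deriv
  have hY' : ∀ i : Fin 3, deriv (Y i) t = 0 := by
    intro i
    have h2 : Y i = fun _ : ℝ => y := funext (hY i)
    rw [h2]; simp
  constructor
  · have key : ∀ i : Fin 3,
        m * (W i t * deriv (X i) t - deriv (W i) t * X i t) = m * r ^ 2 * ω := by
      intro i
      rw [hW', hX', hW i, hX i]
      have := Real.sin_sq_add_cos_sq (ω * t + a i)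
      linear_combination (m * r ^ 2 * ω) * this
    rw [Finset.sum_congr rfl fun i _ => key i]
    simp [Fin.sum_univ_three]; ring
  · have key : ∀ i : Fin 3,
        m * (W i t * deriv (Y i) t - deriv (W i) t * Y i t)
          = m * r * ω * y * Real.sin (ω * t + a i) := by
      intro i
      rw [hW', hY', hY i]; ring
    rw [Finset.sum_congr rfl fun i _ => key i]
    have hsum : Real.sin (ω * t + a 0) + Real.sin (ω * t + a 1) + Real.sin (ω * t + a 2) = 0 := by
      rw [ha 0, ha 1, ha 2]
      simp only [Fin.val_zero, Fin.val_one, Fin.val_two]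
      push_cast
      rw [show (2:ℝ) * π * 0 / 3 = 0 by ring]
      rw [show ω * t + 2 * π * 2 / 3 = (ω * t + 2 * π * 1 / 3) + 2 * π * 1 / 3 by ring]
      rw [show ω * t + 2 * π * 1 / 3 = ω * t + 2 * π * 1 / 3 by rfl]
      simp only [Real.sin_add, Real.cos_add, add_zero]
      have hc : Real.cos (2 * π * 1 / 3) = -1/2 := by
        rw [show (2:ℝ) * π * 1 / 3 = π - π/3 by ring, Real.cos_pi_sub, Real.cos_pi_div_three]; ring
      have hs : Real.sin (2 * π * 1 / 3) = Real.sqrt 3 / 2 := by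
        rw [show (2:ℝ) * π * 1 / 3 = π - π/3 by ring, Real.sin_pi_sub, Real.sin_pi_div_three]
      rw [hc, hs]
      linear_combination (-(Real.sin (ω * t)) / 4) * (Real.sq_sqrt (show (0:ℝ) ≤ 3 by norm_num))
    rw [Fin.sum_univ_three]
    linear_combination (m * r * ω * y) * hsum
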